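/- Every integer v with |v| ≤ B can be written as v = Σ_{j=1}^{δ_B} B_j · v^(j) for some coefficients v^(j) ∈ {-1,0,1}, where δ_B = ⌊log₂ B⌋ + 1 and B_j = ⌊(B + 2^{j-1})/2^j⌋. -/
import Mathlib


lemma term5 (B j : ℕ) : (B + 2 ^ (j + 1)) / 2 ^ (j + 2) = (B / 2 + 2 ^ j) / 2 ^ (j + 1) := by
  have h1 : B + 2 ^ (j + 1) = B + 2 ^ j * 2 := by ring
  have h2 : (2 : ℕ) ^ (j + 2) = 2 * 2 ^ (j + 1) := by ring
  rw [h1, h2, ← Nat.div_div_eq_div_mul, Nat.add_mul_div_right _ _ (by norm_num : (0:ℕ) < 2)]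

lemma aux5 : ∀ n (B : ℕ), 0 < B → Nat.log 2 B = n → ∀ v : ℤ, |v| ≤ (B : ℤ) →
    ∃ c : Fin (n + 1) → ℤ,
      (∀ j, c j = -1 ∨ c j = 0 ∨ c j = 1) ∧
      v = ∑ j : Fin (n + 1), (((B + 2 ^ (j : ℕ)) / 2 ^ ((j : ℕ) + 1) : ℕ) : ℤ) * c j := by
  intro n
  induction n with
  | zero =>
    intro B hB hlog v hv
    have hB1 : B = 1 := by
      have := Nat.log_eq_zero_iff.mp hlog
      omega
    subst hB1
    refine ⟨fun _ => v, fun j => ?_, ?_⟩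
    · have := abs_le.mp hv
      show v = -1 ∨ v = 0 ∨ v = 1
      omega
    · simp
  | succ n ih =>
    intro B hB hlog v hv
    have hb2 : 2 ≤ B := by
      by_contra h
      have : Nat.log 2 B = 0 := Nat.log_eq_zero_iff.mpr (by omega)
      omega
    have hB' : 0 < B / 2 := Nat.div_pos hb2 (by norm_num)
    have hlog' : Nat.log 2 (B / 2) = n := by
      rw [Nat.log_div_base, hlog]
      omega
    have habs := abs_le.mp hv
    have hBsplit : B = 2 * (B / 2) + B % 2 := by omega
    have hB1 : (B + 1) / 2 = B / 2 + B % 2 := by omega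
    -- choose the first coefficient
    set c₀ : ℤ := if |v| ≤ ((B / 2 : ℕ) : ℤ) then 0 else if 0 ≤ v then 1 else -1 with hc₀
    set v' : ℤ := v - c₀ * (((B + 1) / 2 : ℕ) : ℤ) with hv'
    have hc₀cases : c₀ = -1 ∨ c₀ = 0 ∨ c₀ = 1 := by
      rw [hc₀]; split_ifs <;> simp
    have hv'le : |v'| ≤ ((B / 2 : ℕ) : ℤ) := by
      rw [abs_le]
      rw [hv', hc₀]
      have h2 : (((B + 1) / 2 : ℕ) : ℤ) = ((B / 2 : ℕ) : ℤ) + ((B % 2 : ℕ) : ℤ) := by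
        exact_mod_cast congrArg Nat.cast hB1
      have h3 : (B : ℤ) = 2 * ((B / 2 : ℕ) : ℤ) + ((B % 2 : ℕ) : ℤ) := by
        exact_mod_cast congrArg Nat.cast hBsplit
      split_ifs with h4 h5
      · have := abs_le.mp h4; constructor <;> omega
      · have := abs_le.mp hv
        rw [abs_le] at h4
        push_neg at h4
        constructor <;> omega
      · have := abs_le.mp hv
        rw [abs_le] at h4
        push_neg at h4
        constructor <;> omega
    obtain ⟨c', hc', he'⟩ := ih (B / 2) hB' hlog' v' hv'le
    refine ⟨Fin.cases c₀ c', fun j => ?_, ?_⟩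
    · induction j using Fin.cases with
      | zero => simpa using hc₀cases
      | succ i => simpa using hc' i
    · rw [Fin.sum_univ_succ]
      simp only [Fin.cases_zero, Fin.cases_succ, Fin.val_zero, Fin.val_succ]
      have hsum : ∑ i : Fin (n + 1),
          (((B + 2 ^ ((i : ℕ) + 1)) / 2 ^ (((i : ℕ) + 1) + 1) : ℕ) : ℤ) * c' i = v' := by
        rw [he']
        apply Finset.sum_congr rfl
        intro i _
        congr 1
        exact_mod_cast congrArg Nat.cast (term5 B (i : ℕ))
      rw [hsum, hv']
      push_cast
      ring

/-- Every integer `v` with `|v| ≤ B` can be written as `v = Σ_{j=1}^{δ_B} B_j · v^(j)`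
with coefficients `v^(j) ∈ {-1,0,1}`, where `δ_B = ⌊log₂ B⌋ + 1` and
`B_j = ⌊(B + 2^{j-1}) / 2^j⌋`. -/
theorem stmt5 (B : ℕ) (hB : 0 < B) (v : ℤ) (hv : |v| ≤ (B : ℤ)) :
    ∃ c : Fin (Nat.log 2 B + 1) → ℤ,
      (∀ j, c j = -1 ∨ c j = 0 ∨ c j = 1) ∧
      v = ∑ j : Fin (Nat.log 2 B + 1), (((B + 2 ^ (j : ℕ)) / 2 ^ ((j : ℕ) + 1) : ℕ) : ℤ) * c j :=
  aux5 (Nat.log 2 B) B hB rfl v hv
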